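/- Let X = ℕ with its natural metric and let T : ℓ¹(ℕ) → ℓ¹(ℕ) be the rank-one operator Tξ = (Σₙ ξₙ) δ₀. Then T is bounded, but T is not a limit in operator norm of bounded operators with finite propagation; that is, T does not belong to the ℓ¹ uniform Roe algebra B¹_u(ℕ). More precisely, for every bounded operator S on ℓ¹(ℕ) with finite propagation, ‖T − S‖ ≥ 1. -/
import Mathlib

open scoped ENNReal

/-- A map between (pseudo)metric spaces is uniformly expansive if points at distance at most `R`
are sent to points at distance at most `S = S(R)`. -/
def UniformlyExpansive {X Y : Type*} [PseudoMetricSpace X] [PseudoMetricSpace Y]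
    (f : X → Y) : Prop :=
  ∀ R : ℝ, 0 < R → ∃ S : ℝ, 0 < S ∧ ∀ x₁ x₂ : X, dist x₁ x₂ ≤ R → dist (f x₁) (f x₂) ≤ S

/-- Two maps are close if they are at uniformly bounded distance. -/
def Close {X Y : Type*} [PseudoMetricSpace Y] (f g : X → Y) : Prop :=
  ∃ C : ℝ, 0 < C ∧ ∀ x : X, dist (f x) (g x) ≤ C

/-- `f : X → Y` is a coarse equivalence if it is uniformly expansive and admits a uniformly
expansive coarse inverse. -/
def IsCoarseEquivalence {X Y : Type*} [PseudoMetricSpace X] [PseudoMetricSpace Y]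
    (f : X → Y) : Prop :=
  UniformlyExpansive f ∧
    ∃ g : Y → X, UniformlyExpansive g ∧ Close (f ∘ g) id ∧ Close (g ∘ f) id

/-- A metric space has bounded geometry if balls of radius `R` have uniformly bounded
cardinality. -/
def BoundedGeometry (X : Type*) [PseudoMetricSpace X] : Prop :=
  ∀ R : ℝ, 0 ≤ R → ∃ N : ℕ, ∀ x : X,
    (Metric.closedBall x R).Finite ∧ (Metric.closedBall x R).ncard ≤ N

/-- The standard basis vector `δ_x` of `ℓ^p(X)`. -/
noncomputable def delta {X : Type*} (p : ℝ≥0∞) (x : X) : lp (fun _ : X => ℂ) p :=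
  letI := Classical.decEq X
  lp.single p x 1

/-- The matrix coefficient `T_{xy} = (T δ_y)(x)` of a bounded operator on `ℓ^p`. -/
noncomputable def matCoef {X Y : Type*} (p : ℝ≥0∞) [Fact (1 ≤ p)]
    (T : lp (fun _ : X => ℂ) p →L[ℂ] lp (fun _ : Y => ℂ) p) (y : Y) (x : X) : ℂ :=
  T (delta p x) y

/-- `T` has propagation at most `R`. -/
def HasPropagationLE {X : Type*} [PseudoMetricSpace X] (p : ℝ≥0∞) [Fact (1 ≤ p)]
    (T : lp (fun _ : X => ℂ) p →L[ℂ] lp (fun _ : X => ℂ) p) (R : ℝ) : Prop :=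
  ∀ x y : X, matCoef p T x y ≠ 0 → dist x y ≤ R

/-- `T` has finite propagation. -/
def FiniteProp {X : Type*} [PseudoMetricSpace X] (p : ℝ≥0∞) [Fact (1 ≤ p)]
    (T : lp (fun _ : X => ℂ) p →L[ℂ] lp (fun _ : X => ℂ) p) : Prop :=
  ∃ R : ℝ, 0 ≤ R ∧ HasPropagationLE p T R

/-- The `ℓ^p` uniform Roe algebra of `X`, as the operator-norm closure of the set of
finite propagation bounded operators on `ℓ^p(X)`. -/
noncomputable def RoeAlgSet (X : Type*) [PseudoMetricSpace X] (p : ℝ≥0∞) [Fact (1 ≤ p)] :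
    Set (lp (fun _ : X => ℂ) p →L[ℂ] lp (fun _ : X => ℂ) p) :=
  closure {T | FiniteProp p T}

/- ### Auxiliary lemmas -/

lemma aux_summable_norm (ξ : lp (fun _ : ℕ => ℂ) 1) : Summable fun n => ‖ξ n‖ := by
  have h := (lp.memℓp ξ).summable (by norm_num : (0:ℝ) < ((1:ℝ≥0∞)).toReal)
  simpa using h

lemma aux_summable (ξ : lp (fun _ : ℕ => ℂ) 1) : Summable fun n => ξ n :=
  (aux_summable_norm ξ).of_norm

lemma aux_norm_eq (ξ : lp (fun _ : ℕ => ℂ) 1) : ‖ξ‖ = ∑' n, ‖ξ n‖ := by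
  rw [lp.norm_eq_tsum_rpow (by norm_num : (0:ℝ) < ((1:ℝ≥0∞)).toReal) ξ]
  simp

lemma aux_delta_eq (x : ℕ) : delta (1:ℝ≥0∞) x = lp.single (E := fun _ : ℕ => ℂ) 1 x 1 := by
  unfold delta
  congr!

lemma aux_delta_apply (x j : ℕ) : (delta (1:ℝ≥0∞) x) j = if j = x then (1:ℂ) else 0 := by
  rw [aux_delta_eq, lp.single_apply]
  by_cases h : j = x <;> simp [h]

lemma aux_norm_delta (x : ℕ) : ‖delta (1:ℝ≥0∞) x‖ = 1 := by
  rw [aux_norm_eq, tsum_eq_single x (by intro m hm; simp [aux_delta_apply, hm])]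
  simp [aux_delta_apply]

lemma aux_tsum_delta (n : ℕ) : (∑' m : ℕ, (delta (1:ℝ≥0∞) n) m) = 1 := by
  rw [tsum_eq_single n (by intro m hm; simp [aux_delta_apply, hm])]
  simp [aux_delta_apply]

noncomputable def Tsum : lp (fun _ : ℕ => ℂ) 1 →L[ℂ] lp (fun _ : ℕ => ℂ) 1 :=
  LinearMap.mkContinuous
    { toFun := fun ξ => (∑' n, ξ n) • delta 1 0
      map_add' := fun ξ η => by
        have h : (∑' n, (ξ + η) n) = (∑' n, ξ n) + ∑' n, η n := by
          rw [← Summable.tsum_add (aux_summable ξ) (aux_summable η)]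
          exact tsum_congr fun n => by simp
        dsimp only
        rw [h, add_smul]
      map_smul' := fun c ξ => by
        dsimp only
        simp only [RingHom.id_apply, smul_smul]
        congr 1
        rw [← (aux_summable ξ).tsum_mul_left c]
        exact tsum_congr fun n => by simp }
    1 (fun ξ => by
      simp only [LinearMap.coe_mk, AddHom.coe_mk, one_mul]
      rw [norm_smul, aux_norm_delta, mul_one, aux_norm_eq]
      exact norm_tsum_le_tsum_norm (aux_summable_norm ξ))

lemma aux_Tsum_apply (ξ : lp (fun _ : ℕ => ℂ) 1) : Tsum ξ = (∑' n, ξ n) • delta 1 0 := rfl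

lemma aux_dist_from_finite_prop (S : lp (fun _ : ℕ => ℂ) 1 →L[ℂ] lp (fun _ : ℕ => ℂ) 1)
    (hS : FiniteProp 1 S) : 1 ≤ ‖Tsum - S‖ := by
  obtain ⟨R, hR0, hR⟩ := hS
  set n : ℕ := ⌈R⌉₊ + 1 with hn
  have hdist : dist (0:ℕ) n = (n:ℝ) := by
    rw [Nat.dist_eq]
    simp
  have hRn : R < (n:ℝ) := by
    calc R ≤ (⌈R⌉₊ : ℝ) := Nat.le_ceil R
    _ < (n:ℝ) := by exact_mod_cast Nat.lt_succ_self _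
  have hS0 : S (delta 1 n) 0 = 0 := by
    by_contra h
    have := hR 0 n h
    rw [hdist] at this
    linarith
  have hT0 : Tsum (delta 1 n) 0 = 1 := by
    rw [aux_Tsum_apply, lp.coeFn_smul, Pi.smul_apply, aux_tsum_delta, aux_delta_apply]
    simp
  have hval : ((Tsum - S) (delta 1 n)) 0 = 1 := by
    rw [ContinuousLinearMap.sub_apply, lp.coeFn_sub, Pi.sub_apply, hT0, hS0, sub_zero]
  calc (1:ℝ) = ‖((Tsum - S) (delta 1 n)) 0‖ := by rw [hval]; simp
  _ ≤ ‖(Tsum - S) (delta 1 n)‖ := lp.norm_apply_le_norm one_ne_zero _ 0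
  _ ≤ ‖Tsum - S‖ := (Tsum - S).unit_le_opNorm _ (by rw [aux_norm_delta])

theorem summing_functional_not_in_uniform_Roe_algebra :
    ∃ T : lp (fun _ : ℕ => ℂ) 1 →L[ℂ] lp (fun _ : ℕ => ℂ) 1,
      (∀ ξ : lp (fun _ : ℕ => ℂ) 1, T ξ = (∑' n : ℕ, ξ n) • delta 1 0) ∧
      (∀ S : lp (fun _ : ℕ => ℂ) 1 →L[ℂ] lp (fun _ : ℕ => ℂ) 1,
        FiniteProp 1 S → 1 ≤ ‖T - S‖) ∧
      T ∉ RoeAlgSet ℕ 1 := by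
  refine ⟨Tsum, fun ξ => rfl, aux_dist_from_finite_prop, ?_⟩
  intro hmem
  rw [RoeAlgSet, Metric.mem_closure_iff] at hmem
  obtain ⟨S, hS, hd⟩ := hmem 1 one_pos
  have := aux_dist_from_finite_prop S hS
  rw [dist_eq_norm] at hd
  linarith
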